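/- For integers d ≥ 1 and r > d, any real solution z ∈ [d, r−2] of the equation (z+1−ε)(z+1+ε)(C(r−2,d) − C(z,d)) = (z−ε)(z+ε)(C(r−2,d) − C(z−1,d)) (with ε ∈ {0,1} and C(z,d) = z(z−1)⋯(z−d+1)/d! extended to real z) satisfies L(d;r) < z, where L(d;r) = (2/(d+2))^{1/d}(r−2) + (1 − (2/(d+2))^{1/d})(d−1)/2. -/
import Mathlib


/-- The polynomial extension of the binomial coefficient to real arguments:
`C(t, d) = t(t−1)⋯(t−d+1)/d!`. -/
noncomputable def realChoose (d : ℕ) (t : ℝ) : ℝ :=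
  (∏ i ∈ Finset.range d, (t - i)) / (Nat.factorial d)

set_option maxHeartbeats 1000000 in
/-- For `d ≥ 1` and `r > d`, any real solution `z ∈ [d, r−2]` of the
first-difference equation
`(z+1−ε)(z+1+ε)(C(r−2,d) − C(z,d)) = (z−ε)(z+ε)(C(r−2,d) − C(z−1,d))`
(with `ε ∈ {0,1}`) satisfies `z > L(d;r)`, where
`L(d;r) = (2/(d+2))^{1/d}(r−2) + (1 − (2/(d+2))^{1/d})(d−1)/2`. -/
theorem stmt19 (d r : ℕ) (hd : 1 ≤ d) (hr : d < r) (ε : ℝ) (hε : ε = 0 ∨ ε = 1)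
    (z : ℝ) (hz1 : (d : ℝ) ≤ z) (hz2 : z ≤ (r : ℝ) - 2)
    (heq : (z + 1 - ε) * (z + 1 + ε) * (realChoose d ((r : ℝ) - 2) - realChoose d z)
      = (z - ε) * (z + ε) * (realChoose d ((r : ℝ) - 2) - realChoose d (z - 1))) :
    (2 / ((d : ℝ) + 2)) ^ ((1 : ℝ) / (d : ℝ)) * ((r : ℝ) - 2) +
        (1 - (2 / ((d : ℝ) + 2)) ^ ((1 : ℝ) / (d : ℝ))) * ((d : ℝ) - 1) / 2 < z := by
  obtain ⟨e, rfl⟩ : ∃ e, d = e + 1 := ⟨d - 1, (Nat.succ_pred_eq_of_pos hd).symm⟩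
  set d := e + 1 with hdd
  have hde : (d : ℝ) = (e : ℝ) + 1 := by push_cast [hdd]; ring
  have hz1' : (e : ℝ) + 1 ≤ z := by rw [← hde]; exact hz1
  set A : ℝ := ∏ i ∈ Finset.range d, ((r:ℝ) - 2 - i) with hA
  set P : ℝ := ∏ i ∈ Finset.range d, (z - i) with hP
  set Q : ℝ := ∏ i ∈ Finset.range e, (z - 1 - i) with hQ
  -- positivity of factors
  have hfacP : ∀ i ∈ Finset.range d, (0:ℝ) < z - i := by
    intro i hi
    have : (i : ℝ) ≤ (e : ℝ) := by
      exact_mod_cast Nat.lt_succ_iff.mp (Finset.mem_range.mp hi)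
    linarith
  have hfacA : ∀ i ∈ Finset.range d, (0:ℝ) < (r:ℝ) - 2 - i := by
    intro i hi; have := hfacP i hi; linarith
  have hPpos : 0 < P := Finset.prod_pos hfacP
  have hApos : 0 < A := Finset.prod_pos hfacA
  have hQpos : 0 < Q := by
    apply Finset.prod_pos
    intro i hi
    have : (i : ℝ) + 1 ≤ (e : ℝ) := by exact_mod_cast Finset.mem_range.mp hi
    linarith
  -- structural product identities
  have hPz : P = Q * z := by
    rw [hP, Finset.prod_range_succ',
      Finset.prod_congr rfl (fun i _ => by push_cast; ring :
        ∀ i ∈ Finset.range e, (z - ((i:ℕ)+1:ℕ)) = z - 1 - i)]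
    push_cast; ring
  have hPzm1 : (∏ i ∈ Finset.range d, (z - 1 - i)) = Q * (z - 1 - e) := by
    rw [Finset.prod_range_succ]
  -- key identity
  have key : (2*z+1)*A = Q*(((d:ℝ)+2)*z^2 + z - (d:ℝ)*ε^2) := by
    have hfac : (d.factorial : ℝ) ≠ 0 := by positivity
    simp only [realChoose] at heq
    rw [← hP] at heq
    rw [hPz, hPzm1] at heq
    field_simp at heq
    rw [hde]
    linear_combination heq
  -- strict bound A < (d+2)/2 * P
  have hA_lt : A < (((d:ℝ)+2)/2) * P := by
    have h2z : (0:ℝ) < 2*z+1 := by linarith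
    have hq : Q*(((d:ℝ)+2)*z^2 + z - (d:ℝ)*ε^2) < Q*((((d:ℝ)+2)/2) * (z*(2*z+1))) := by
      apply mul_lt_mul_of_pos_left _ hQpos
      have hε2 : (0:ℝ) ≤ ε^2 := sq_nonneg ε
      have hd1 : (1:ℝ) ≤ (d:ℝ) := by rw [hde]; push_cast; linarith [Nat.cast_nonneg (α := ℝ) e]
      nlinarith
    have : (2*z+1)*A < (((d:ℝ)+2)/2) * (2*z+1) * P := by
      rw [key, hPz]; nlinarith [hq]
    nlinarith [this, h2z]
  -- pairing inequality
  set R : ℝ := (r:ℝ) - 2 - ((d:ℝ)-1)/2 with hR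
  set w : ℝ := z - ((d:ℝ)-1)/2 with hw
  have hwpos : 0 < w := by rw [hw, hde]; push_cast; linarith
  have hwR : w ≤ R := by rw [hw, hR]; linarith
  have hRpos : 0 < R := lt_of_lt_of_le hwpos hwR
  have hpair : R^d * P ≤ w^d * A := by
    have hfP : R^d * P = ∏ i ∈ Finset.range d, (R * (z - i)) := by
      rw [Finset.prod_mul_distrib, Finset.prod_const, Finset.card_range, hP]
    have hfA : w^d * A = ∏ i ∈ Finset.range d, (w * ((r:ℝ) - 2 - i)) := by
      rw [Finset.prod_mul_distrib, Finset.prod_const, Finset.card_range, hA]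
    have hsq : (R^d * P)^2 ≤ (w^d * A)^2 := by
      rw [hfP, hfA, sq, sq]
      nth_rewrite 2 [← Finset.prod_range_reflect]
      nth_rewrite 4 [← Finset.prod_range_reflect]
      rw [← Finset.prod_mul_distrib, ← Finset.prod_mul_distrib]
      apply Finset.prod_le_prod
      · intro i hi
        have h1 := hfacP i hi
        have h2 := hfacP (d - 1 - i) (by
          simp only [Finset.mem_range]; omega)
        positivity
      · intro i hi
        have hi' : i ≤ e := Nat.lt_succ_iff.mp (Finset.mem_range.mp hi)
        have hcast : ((d - 1 - i : ℕ) : ℝ) = (e : ℝ) - i := by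
          have : d - 1 - i = e - i := by omega
          rw [this, Nat.cast_sub hi']
        rw [hcast]
        have hie : (i:ℝ) ≤ (e:ℝ) := by exact_mod_cast hi'
        have h1 : 0 < z - i := hfacP i (Finset.mem_range.mp hi |> fun h => Finset.mem_range.mpr h)
        -- let a = (d-1)/2 - i = e/2 - i
        have key2 : R^2 * ((z - i) * (z - ((e:ℝ) - i))) ≤ w^2 * (((r:ℝ)-2-i) * ((r:ℝ)-2-((e:ℝ)-i))) := by
          have hz_i : z - i = w + ((e:ℝ)/2 - i) := by rw [hw, hde]; push_cast; ring
          have hz_j : z - ((e:ℝ) - i) = w - ((e:ℝ)/2 - i) := by rw [hw, hde]; push_cast; ring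
          have hr_i : (r:ℝ) - 2 - i = R + ((e:ℝ)/2 - i) := by rw [hR, hde]; push_cast; ring
          have hr_j : (r:ℝ) - 2 - ((e:ℝ) - i) = R - ((e:ℝ)/2 - i) := by rw [hR, hde]; push_cast; ring
          rw [hz_i, hz_j, hr_i, hr_j]
          have hw2R2 : w^2 ≤ R^2 := by nlinarith [hwpos, hwR]
          nlinarith [mul_le_mul_of_nonneg_right hw2R2 (sq_nonneg ((e:ℝ)/2 - i))]
        calc R * (z - i) * (R * (z - ((e:ℝ) - i)))
            = R^2 * ((z - i) * (z - ((e:ℝ) - i))) := by ring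
          _ ≤ w^2 * (((r:ℝ)-2-i) * ((r:ℝ)-2-((e:ℝ)-i))) := key2
          _ = w * ((r:ℝ)-2-i) * (w * ((r:ℝ)-2-((e:ℝ)-i))) := by ring
    have hX : 0 < R^d * P := by positivity
    have hY : 0 < w^d * A := by positivity
    nlinarith [hsq, hX, hY]
  -- combine: R^d < (d+2)/2 * w^d
  have hfinal : R^d < (((d:ℝ)+2)/2) * w^d := by
    have hwd : 0 < w^d := by positivity
    have : R^d * P < (((d:ℝ)+2)/2) * w^d * P := by
      calc R^d * P ≤ w^d * A := hpair
        _ < w^d * ((((d:ℝ)+2)/2) * P) := by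
            exact mul_lt_mul_of_pos_left hA_lt hwd
        _ = (((d:ℝ)+2)/2) * w^d * P := by ring
    exact lt_of_mul_lt_mul_right this hPpos.le
  -- rpow manipulations
  set c : ℝ := ((d:ℝ)+2)/2 with hc
  have hcpos : (0:ℝ) < c := by rw [hc]; positivity
  set m : ℝ := c ^ ((1:ℝ)/(d:ℝ)) with hm
  have hmpos : 0 < m := Real.rpow_pos_of_pos hcpos _
  have hdne : ((d:ℝ)) ≠ 0 := by positivity
  have hmd : m ^ (d:ℕ) = c := by
    rw [hm, ← Real.rpow_natCast (c ^ ((1:ℝ)/(d:ℝ))) d, ← Real.rpow_mul hcpos.le]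
    rw [one_div, inv_mul_cancel₀ hdne, Real.rpow_one]
  have hRmw : R < m * w := by
    by_contra h
    push_neg at h
    have h0 : 0 ≤ m * w := by positivity
    have := pow_le_pow_left₀ h0 h d
    rw [mul_pow, hmd] at this
    have : c * w^d ≤ R^d := this
    linarith [hfinal]
  have hk : (2 / ((d : ℝ) + 2)) ^ ((1 : ℝ) / (d : ℝ)) = m⁻¹ := by
    rw [hm, hc, ← Real.inv_rpow (by positivity)]
    congr 1
    field_simp
  rw [hk]
  have hlt : m⁻¹ * R < w := by
    have := mul_lt_mul_of_pos_left hRmw (inv_pos.mpr hmpos)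
    rwa [← mul_assoc, inv_mul_cancel₀ hmpos.ne', one_mul] at this
  have hexp : m⁻¹ * R = m⁻¹ * ((r:ℝ)-2) - m⁻¹ * (((d:ℝ)-1)/2) := by rw [hR]; ring
  have hwexp : w = z - ((d:ℝ)-1)/2 := hw
  rw [hexp, hwexp] at hlt
  nlinarith [hlt]
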